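/- Main coherence theorem: Let ψ¹_1,…,ψ¹_N and ψ²_1,…,ψ²_N be two linearly independent families of unit vectors in a finite-dimensional complex Hilbert space H with ⟨ψ²_{j'}, ψ²_j⟩ ≠ 0 for all j, j'. Suppose there are operators A_k on H with ∑_k A_k† A_k = 1 and A_k ψ¹_j = c_{jk} ψ²_j for scalars c_{jk}. Suppose further there exist coefficients q_j, all nonzero, and r_j, such that ∑_k A_k |φ¹⟩⟨φ¹| A_k† = |φ²⟩⟨φ²| where φ¹ = ∑_j q_j ψ¹_j and φ² = ∑_j r_j ψ²_j are unit vectors. Then there exists a unitary U on H such that |ψ²_j⟩⟨ψ²_j| = U |ψ¹_j⟩⟨ψ¹_j| U† for all j. -/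

import Mathlib

open scoped InnerProductSpace ComplexOrder

/-- The rank-one operator `|φ⟩⟨χ| : v ↦ ⟨χ, v⟩ φ`. -/
noncomputable def outer {H : Type*} [NormedAddCommGroup H] [InnerProductSpace ℂ H]
    (φ χ : H) : H →ₗ[ℂ] H where
  toFun v := ⟪χ, v⟫_ℂ • φ
  map_add' x y := by simp [inner_add_right, add_smul]
  map_smul' c x := by simp [inner_smul_right, smul_smul]

theorem adjoint_id' {H : Type*} [NormedAddCommGroup H] [InnerProductSpace ℂ H]
    [FiniteDimensional ℂ H] :
    LinearMap.adjoint (LinearMap.id : H →ₗ[ℂ] H) = LinearMap.id := by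
  apply LinearMap.ext
  intro x
  apply ext_inner_left ℂ
  intro v
  rw [LinearMap.adjoint_inner_right]
  simp

/-- Extend a pair-inner-product-preserving correspondence between linearly independent
families to a unitary. -/
theorem unitary_of_gram {H : Type*} [NormedAddCommGroup H] [InnerProductSpace ℂ H]
    [FiniteDimensional ℂ H] {N : ℕ} (ψ1 ψ2 : Fin N → H)
    (hli1 : LinearIndependent ℂ ψ1)
    (hGram : ∀ j j', ⟪ψ1 j, ψ1 j'⟫_ℂ = ⟪ψ2 j, ψ2 j'⟫_ℂ) :
    ∃ U : H →ₗ[ℂ] H,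
      (LinearMap.adjoint U ∘ₗ U = LinearMap.id) ∧
      (U ∘ₗ LinearMap.adjoint U = LinearMap.id) ∧
      (∀ j, U (ψ1 j) = ψ2 j) := by
  classical
  set S : Submodule ℂ H := Submodule.span ℂ (Set.range ψ1) with hS
  let b : Module.Basis (Fin N) ℂ S := Module.Basis.span hli1
  let T0 : S →ₗ[ℂ] H := b.constr ℂ (fun j => ψ2 j)
  have hT0b : ∀ j, T0 (b j) = ψ2 j := fun j => b.constr_basis ℂ _ j
  have hcoe : ∀ x : S, (x : H) = ∑ j, (b.repr x) j • ψ1 j := by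
    intro x
    conv_lhs => rw [← b.sum_repr x]
    push_cast
    refine Finset.sum_congr rfl fun j _ => ?_
    rw [Module.Basis.span_apply hli1 j]
  have hT0x : ∀ x : S, T0 x = ∑ j, (b.repr x) j • ψ2 j := by
    intro x
    conv_lhs => rw [← b.sum_repr x]
    rw [map_sum]
    refine Finset.sum_congr rfl fun j _ => ?_
    rw [map_smul, hT0b]
  have key : ∀ x y : S, ⟪T0 x, T0 y⟫_ℂ = ⟪x, y⟫_ℂ := by
    intro x y
    rw [Submodule.coe_inner, hcoe x, hcoe y, hT0x x, hT0x y]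
    simp only [sum_inner, inner_sum, inner_smul_left, inner_smul_right]
    refine Finset.sum_congr rfl fun j _ => ?_
    refine congrArg (fun t => (b.repr y) j * t) ?_
    refine Finset.sum_congr rfl fun j' _ => ?_
    rw [hGram j' j]
  let T : S →ₗᵢ[ℂ] H := T0.isometryOfInner key
  let U0 : H →ₗᵢ[ℂ] H := T.extend
  have hinner : ∀ x y : H, ⟪U0 x, U0 y⟫_ℂ = ⟪x, y⟫_ℂ := fun x y =>
    U0.inner_map_map x y
  have hadj : LinearMap.adjoint U0.toLinearMap ∘ₗ U0.toLinearMap = LinearMap.id := by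
    apply LinearMap.ext
    intro x
    apply ext_inner_left ℂ
    intro v
    simp only [LinearMap.comp_apply, LinearMap.id_apply, LinearMap.adjoint_inner_right]
    exact hinner v x
  have hinj : Function.Injective U0.toLinearMap := U0.injective
  have hsurj : Function.Surjective U0.toLinearMap :=
    (LinearMap.injective_iff_surjective).mp hinj
  refine ⟨U0.toLinearMap, hadj, ?_, ?_⟩
  · apply LinearMap.ext
    intro y
    obtain ⟨x, rfl⟩ := hsurj y
    have := congrArg (U0.toLinearMap) (LinearMap.congr_fun hadj x)
    exact this
  · intro j
    have hmem : ψ1 j ∈ S := Submodule.subset_span ⟨j, rfl⟩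
    have h1 : (⟨ψ1 j, hmem⟩ : S) = b j := by
      apply Subtype.ext
      exact congrArg Subtype.val (Module.Basis.span_apply hli1 j).symm
    have h2 : U0.toLinearMap (ψ1 j) = T ⟨ψ1 j, hmem⟩ := T.extend_apply ⟨ψ1 j, hmem⟩
    rw [h2, h1]
    show T0 (b j) = ψ2 j
    exact hT0b j

theorem stmt_15 {H : Type*} [NormedAddCommGroup H] [InnerProductSpace ℂ H]
    [FiniteDimensional ℂ H] {N m : ℕ} (ψ1 ψ2 : Fin N → H)
    (hli1 : LinearIndependent ℂ ψ1) (hli2 : LinearIndependent ℂ ψ2)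
    (h1 : ∀ j, ‖ψ1 j‖ = 1) (h2 : ∀ j, ‖ψ2 j‖ = 1)
    (hnz : ∀ j j', ⟪ψ2 j', ψ2 j⟫_ℂ ≠ 0)
    (A : Fin m → (H →ₗ[ℂ] H))
    (hA : ∑ k, LinearMap.adjoint (A k) ∘ₗ A k = LinearMap.id)
    (c : Fin N → Fin m → ℂ) (hc : ∀ j k, A k (ψ1 j) = c j k • ψ2 j)
    (q r : Fin N → ℂ) (hq : ∀ j, q j ≠ 0)
    (hφ1 : ‖∑ j, q j • ψ1 j‖ = 1) (hφ2 : ‖∑ j, r j • ψ2 j‖ = 1)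
    (hpure : ∑ k, (A k) ∘ₗ outer (∑ j, q j • ψ1 j) (∑ j, q j • ψ1 j)
          ∘ₗ LinearMap.adjoint (A k)
        = outer (∑ j, r j • ψ2 j) (∑ j, r j • ψ2 j)) :
    ∃ U : H →ₗ[ℂ] H,
      (LinearMap.adjoint U ∘ₗ U = LinearMap.id) ∧
      (U ∘ₗ LinearMap.adjoint U = LinearMap.id) ∧
      (∀ j, outer (ψ2 j) (ψ2 j)
          = U ∘ₗ outer (ψ1 j) (ψ1 j) ∘ₗ LinearMap.adjoint U) := by
  classical
  rcases Nat.eq_zero_or_pos N with hN | hN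
  · subst hN
    refine ⟨LinearMap.id, ?_, ?_, fun j => j.elim0⟩ <;>
      simp [adjoint_id']
  set φ1 : H := ∑ j, q j • ψ1 j with hφ1def
  set φ2 : H := ∑ j, r j • ψ2 j with hφ2def
  -- Step 1: pure output implies each A_k φ1 is a multiple of φ2.
  have hpure' : ∀ v : H, ∑ k, ⟪A k φ1, v⟫_ℂ • A k φ1 = ⟪φ2, v⟫_ℂ • φ2 := by
    intro v
    have := LinearMap.congr_fun hpure v
    simpa [outer, LinearMap.sum_apply, LinearMap.comp_apply, map_smul,
      LinearMap.adjoint_inner_right] using this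
  have hφ2ne : φ2 ≠ 0 := by
    intro h
    rw [h] at hφ2
    simp at hφ2
  have hAkφ : ∀ k, ∃ lam : ℂ, A k φ1 = lam • φ2 := by
    intro k
    have hmem : A k φ1 ∈ (ℂ ∙ φ2)ᗮᗮ := by
      rw [Submodule.mem_orthogonal]
      intro v hv
      have hv2 : ⟪φ2, v⟫_ℂ = 0 := hv φ2 (Submodule.mem_span_singleton_self φ2)
      have h0 : ∑ k', ⟪A k' φ1, v⟫_ℂ • A k' φ1 = 0 := by
        rw [hpure' v, hv2, zero_smul]
      have h0' : ∑ k', ⟪A k' φ1, v⟫_ℂ * ⟪v, A k' φ1⟫_ℂ = 0 := by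
        have := congrArg (fun w => ⟪v, w⟫_ℂ) h0
        simpa [inner_sum, inner_smul_right] using this
      have h0'' : ∑ k', (Complex.normSq ⟪A k' φ1, v⟫_ℂ : ℝ) = 0 := by
        have : (((∑ k', (Complex.normSq ⟪A k' φ1, v⟫_ℂ : ℝ)) : ℂ)) = 0 := by
          push_cast
          rw [← h0']
          refine Finset.sum_congr rfl fun k' _ => ?_
          rw [← inner_conj_symm (A k' φ1) v]
          rw [Complex.normSq_eq_conj_mul_self, Complex.conj_conj]
          ring
        exact_mod_cast this
      have hk0 : Complex.normSq ⟪A k φ1, v⟫_ℂ = 0 := by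
        have hnonneg : ∀ k' ∈ Finset.univ, (0:ℝ) ≤ Complex.normSq ⟪A k' φ1, v⟫_ℂ :=
          fun k' _ => Complex.normSq_nonneg _
        exact (Finset.sum_eq_zero_iff_of_nonneg hnonneg).mp h0'' k (Finset.mem_univ k)
      have : ⟪A k φ1, v⟫_ℂ = 0 := by
        exact Complex.normSq_eq_zero.mp hk0
      rw [← inner_conj_symm]
      simp [this]
    rw [Submodule.orthogonal_orthogonal] at hmem
    exact Submodule.mem_span_singleton.mp hmem |>.imp fun a ha => ha.symm
  choose lam hlam using hAkφ
  -- Step 2: from linear independence of ψ2, q_j c_{jk} = lam_k r_j.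
  have hcoef : ∀ j k, q j * c j k = lam k * r j := by
    intro j k
    have hAφ1 : A k φ1 = ∑ j', (q j' * c j' k) • ψ2 j' := by
      rw [hφ1def, map_sum]
      refine Finset.sum_congr rfl fun j' _ => ?_
      rw [map_smul, hc, smul_smul]
    have hAφ2 : A k φ1 = ∑ j', (lam k * r j') • ψ2 j' := by
      rw [hlam k, hφ2def, Finset.smul_sum]
      refine Finset.sum_congr rfl fun j' _ => ?_
      rw [smul_smul]
    have hzero : ∑ j', (q j' * c j' k - lam k * r j') • ψ2 j' = 0 := by
      simp only [sub_smul]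
      rw [Finset.sum_sub_distrib, ← hAφ1, ← hAφ2, sub_self]
    have := Fintype.linearIndependent_iff.mp hli2 _ hzero j
    exact sub_eq_zero.mp this
  -- Step 3: Gram relation
  have hParseval : ∀ x y : H, ⟪x, y⟫_ℂ = ∑ k, ⟪A k x, A k y⟫_ℂ := by
    intro x y
    have hy := LinearMap.congr_fun hA y
    simp only [LinearMap.sum_apply, LinearMap.comp_apply, LinearMap.id_apply] at hy
    calc ⟪x, y⟫_ℂ = ⟪x, ∑ k, LinearMap.adjoint (A k) (A k y)⟫_ℂ := by rw [hy]
    _ = ∑ k, ⟪A k x, A k y⟫_ℂ := by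
        rw [inner_sum]
        exact Finset.sum_congr rfl fun k _ => LinearMap.adjoint_inner_right _ _ _
  set d : Fin N → ℂ := fun j => r j / q j with hd
  have hcd : ∀ j k, c j k = lam k * d j := by
    intro j k
    apply mul_left_cancel₀ (hq j)
    rw [hcoef j k, hd]
    simp only
    rw [mul_comm (q j), mul_assoc, div_mul_cancel₀ _ (hq j)]
  set Lc : ℂ := ∑ k, (starRingEnd ℂ) (lam k) * lam k with hLc
  have hGram0 : ∀ j j', ⟪ψ1 j, ψ1 j'⟫_ℂ
      = (starRingEnd ℂ) (d j) * d j' * Lc * ⟪ψ2 j, ψ2 j'⟫_ℂ := by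
    intro j j'
    rw [hParseval (ψ1 j) (ψ1 j')]
    have : ∀ k, ⟪A k (ψ1 j), A k (ψ1 j')⟫_ℂ
        = ((starRingEnd ℂ) (d j) * d j' * ((starRingEnd ℂ) (lam k) * lam k))
          * ⟪ψ2 j, ψ2 j'⟫_ℂ := by
      intro k
      rw [hc, hc, inner_smul_left, inner_smul_right, hcd, hcd]
      simp only [map_mul]
      ring
    rw [Finset.sum_congr rfl (fun k _ => this k), ← Finset.sum_mul, ← Finset.mul_sum, hLc]
  have hinner1 : ∀ j : Fin N, ⟪ψ1 j, ψ1 j⟫_ℂ = 1 := by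
    intro j
    rw [inner_self_eq_norm_sq_to_K, h1]; norm_num
  have hinner2 : ∀ j : Fin N, ⟪ψ2 j, ψ2 j⟫_ℂ = 1 := by
    intro j
    rw [inner_self_eq_norm_sq_to_K, h2]; norm_num
  have hdd : ∀ j, (starRingEnd ℂ) (d j) * d j * Lc = 1 := by
    intro j
    have := hGram0 j j
    rw [hinner1, hinner2, mul_one] at this
    exact this.symm
  have hLconj : (starRingEnd ℂ) Lc = Lc := by
    rw [hLc, map_sum]
    refine Finset.sum_congr rfl fun k _ => ?_
    simp only [map_mul, Complex.conj_conj]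
    ring
  -- the phases
  set j0 : Fin N := ⟨0, hN⟩ with hj0
  set u : Fin N → ℂ := fun j => (starRingEnd ℂ) (d j0) * Lc * d j with hu
  have huu : ∀ j j', (starRingEnd ℂ) (u j) * u j'
      = (starRingEnd ℂ) (d j) * d j' * Lc := by
    intro j j'
    rw [hu]
    simp only [map_mul, Complex.conj_conj, hLconj]
    have h0 := hdd j0
    calc d j0 * Lc * (starRingEnd ℂ) (d j) * ((starRingEnd ℂ) (d j0) * Lc * d j')
        = ((starRingEnd ℂ) (d j0) * d j0 * Lc) * ((starRingEnd ℂ) (d j) * d j' * Lc) := by ring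
    _ = (starRingEnd ℂ) (d j) * d j' * Lc := by rw [h0, one_mul]
  have huj : ∀ j, (starRingEnd ℂ) (u j) * u j = 1 := by
    intro j
    rw [huu j j, hdd j]
  set ψ2' : Fin N → H := fun j => u j • ψ2 j with hψ2'
  have hGram : ∀ j j', ⟪ψ1 j, ψ1 j'⟫_ℂ = ⟪ψ2' j, ψ2' j'⟫_ℂ := by
    intro j j'
    rw [hψ2']
    simp only [inner_smul_left, inner_smul_right]
    rw [hGram0 j j']
    rw [← huu j j']
    ring
  obtain ⟨U, hU1, hU2, hUψ⟩ := unitary_of_gram ψ1 ψ2' hli1 hGram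
  refine ⟨U, hU1, hU2, fun j => ?_⟩
  apply LinearMap.ext
  intro v
  simp only [LinearMap.comp_apply, outer, LinearMap.coe_mk, AddHom.coe_mk, map_smul]
  rw [LinearMap.adjoint_inner_right, hUψ j, hψ2']
  simp only [inner_smul_left, smul_smul]
  have : (starRingEnd ℂ) (u j) * ⟪ψ2 j, v⟫_ℂ * u j
      = ((starRingEnd ℂ) (u j) * u j) * ⟪ψ2 j, v⟫_ℂ := by ring
  rw [this, huj j, one_mul]
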